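/- If φ | γ ~ Cauchy⁺(0, γ), i.e. φ = γ·T with T ~ Cauchy⁺(0,1) independent of γ, and γ ~ Cauchy⁺(0,1), then the marginal density of φ is h(φ) = (4/π²)·log(φ)/(φ² − 1) for φ ≠ 1 (extended by continuity with value 2/π² at φ = 1). -/

import Mathlib

open MeasureTheory Filter

private lemma deriv_aux (c : ℝ) (hc : 0 < c) (γ : ℝ) :
    HasDerivAt (fun x : ℝ => Real.log (x ^ 2 + c) - Real.log (x ^ 2 + 1))
      (2 * γ / (γ ^ 2 + c) - 2 * γ / (γ ^ 2 + 1)) γ := by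
  have h1 : HasDerivAt (fun x : ℝ => x ^ 2 + c) (2 * γ) γ := by
    simpa using ((hasDerivAt_pow 2 γ).add_const c)
  have h2 : HasDerivAt (fun x : ℝ => x ^ 2 + 1) (2 * γ) γ := by
    simpa using ((hasDerivAt_pow 2 γ).add_const 1)
  have hne1 : γ ^ 2 + c ≠ 0 := by positivity
  have hne2 : γ ^ 2 + 1 ≠ 0 := by positivity
  exact (h1.log hne1).sub (h2.log hne2)

private lemma tendsto_aux (c : ℝ) (hc : 0 < c) :
    Tendsto (fun x : ℝ => Real.log (x ^ 2 + c) - Real.log (x ^ 2 + 1)) atTop (nhds 0) := by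
  have h : ∀ᶠ x : ℝ in atTop, Real.log (x ^ 2 + c) - Real.log (x ^ 2 + 1)
      = Real.log (1 + (c - 1) / (x ^ 2 + 1)) := by
    filter_upwards [eventually_gt_atTop (0 : ℝ)] with x hx
    have hne2 : (0:ℝ) < x ^ 2 + 1 := by positivity
    have hne1 : (0:ℝ) < x ^ 2 + c := by positivity
    rw [← Real.log_div (ne_of_gt hne1) (ne_of_gt hne2)]
    congr 1
    field_simp
    ring
  rw [tendsto_congr' h]
  have h2 : Tendsto (fun x : ℝ => 1 + (c - 1) / (x ^ 2 + 1)) atTop (nhds 1) := by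
    have : Tendsto (fun x : ℝ => (c - 1) / (x ^ 2 + 1)) atTop (nhds 0) := by
      apply Tendsto.div_atTop tendsto_const_nhds
      exact tendsto_atTop_add_const_right _ 1 (tendsto_pow_atTop (by norm_num))
    simpa using tendsto_const_nhds.add this
  have := (Real.continuousAt_log (by norm_num : (1:ℝ) ≠ 0)).tendsto.comp h2
  simpa [Function.comp_def] using this

private lemma integrand_eq (φ γ : ℝ) (hφ : 0 < φ) (hγ : 0 < γ) :
    (1 / γ) * (2 / (Real.pi * (1 + (φ / γ) ^ 2))) * (2 / (Real.pi * (1 + γ ^ 2)))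
      = 4 / Real.pi ^ 2 * γ / ((γ ^ 2 + φ ^ 2) * (γ ^ 2 + 1)) := by
  have hπ : Real.pi ≠ 0 := Real.pi_ne_zero
  have h1 : (1:ℝ) + (φ / γ) ^ 2 ≠ 0 := by positivity
  have h2 : (1:ℝ) + γ ^ 2 ≠ 0 := by positivity
  have h3 : γ ^ 2 + φ ^ 2 ≠ 0 := by positivity
  field_simp
  ring

private lemma key (φ : ℝ) (hφ : 0 < φ) :
    ∫ γ in Set.Ioi (0 : ℝ),
        (1 / γ) * (2 / (Real.pi * (1 + (φ / γ) ^ 2))) * (2 / (Real.pi * (1 + γ ^ 2)))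
      = ∫ γ in Set.Ioi (0 : ℝ), 4 / Real.pi ^ 2 * γ / ((γ ^ 2 + φ ^ 2) * (γ ^ 2 + 1)) := by
  apply setIntegral_congr_fun measurableSet_Ioi
  intro γ hγ
  exact integrand_eq φ γ hφ hγ

theorem stmt_13 :
    (∀ φ : ℝ, 0 < φ → φ ≠ 1 →
      ∫ γ in Set.Ioi (0 : ℝ),
          (1 / γ) * (2 / (Real.pi * (1 + (φ / γ) ^ 2))) * (2 / (Real.pi * (1 + γ ^ 2)))
        = (4 / Real.pi ^ 2) * Real.log φ / (φ ^ 2 - 1)) ∧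
    ∫ γ in Set.Ioi (0 : ℝ),
        (1 / γ) * (2 / (Real.pi * (1 + ((1 : ℝ) / γ) ^ 2))) * (2 / (Real.pi * (1 + γ ^ 2)))
      = 2 / Real.pi ^ 2 := by
  have hπ : (0:ℝ) < Real.pi ^ 2 := by positivity
  constructor
  · intro φ hφ hne
    rw [key φ hφ]
    have hc : (0:ℝ) < φ ^ 2 := by positivity
    have hd : φ ^ 2 - 1 ≠ 0 := by
      intro h
      have h' : (φ - 1) * (φ + 1) = 0 := by nlinarith
      rcases mul_eq_zero.mp h' with h' | h'
      · exact hne (by linarith)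
      · linarith
    set c : ℝ := 4 / Real.pi ^ 2 / (2 * (1 - φ ^ 2)) with hcdef
    have h1mφ : (1:ℝ) - φ ^ 2 ≠ 0 := by intro h; apply hd; linarith
    have hres := integral_Ioi_of_hasDerivAt_of_nonneg'
      (g := fun x : ℝ => c * (Real.log (x ^ 2 + φ ^ 2) - Real.log (x ^ 2 + 1)))
      (g' := fun γ : ℝ => 4 / Real.pi ^ 2 * γ / ((γ ^ 2 + φ ^ 2) * (γ ^ 2 + 1)))
      (a := 0) (l := 0)
      (fun γ _ => by
        have := (deriv_aux (φ ^ 2) hc γ).const_mul c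
        refine this.congr_deriv ?_
        have hne1 : γ ^ 2 + φ ^ 2 ≠ 0 := by positivity
        have hne2 : γ ^ 2 + 1 ≠ 0 := by positivity
        rw [hcdef]
        field_simp
        ring)
      (fun γ hγ => by
        have : (0:ℝ) < γ := hγ
        positivity)
      (by simpa using (tendsto_aux (φ ^ 2) hc).const_mul c)
    rw [hres]
    rw [hcdef]
    have hlog : Real.log (φ ^ 2) = 2 * Real.log φ := by
      rw [Real.log_pow]; push_cast; ring
    simp only [ne_eq, OfNat.ofNat_ne_zero, not_false_eq_true, zero_pow, Real.log_one]
    norm_num [hlog]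
    field_simp
    ring
  · rw [key 1 one_pos]
    have hres := integral_Ioi_of_hasDerivAt_of_nonneg'
      (g := fun x : ℝ => -(2 / Real.pi ^ 2) * (x ^ 2 + 1)⁻¹)
      (g' := fun γ : ℝ => 4 / Real.pi ^ 2 * γ / ((γ ^ 2 + 1 ^ 2) * (γ ^ 2 + 1)))
      (a := 0) (l := 0)
      (fun γ _ => by
        have h2 : HasDerivAt (fun x : ℝ => x ^ 2 + 1) (2 * γ) γ := by
          simpa using ((hasDerivAt_pow 2 γ).add_const 1)
        have hne : γ ^ 2 + 1 ≠ 0 := by positivity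
        have := (h2.inv hne).const_mul (-(2 / Real.pi ^ 2))
        refine this.congr_deriv ?_
        field_simp
        ring)
      (fun γ hγ => by
        have : (0:ℝ) < γ := hγ
        positivity)
      (by
        have h2 : Tendsto (fun x : ℝ => x ^ 2 + 1) atTop atTop :=
          tendsto_atTop_add_const_right _ 1 (tendsto_pow_atTop (by norm_num))
        simpa using h2.inv_tendsto_atTop.const_mul (-(2 / Real.pi ^ 2)))
    rw [hres]
    norm_num
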